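/- Let T be a power bounded operator on H, and write T in block-triangular form with respect to H = H₀ ⊕ H₀^⊥ (where H₀ is the stable subspace) as T = [[T₀, R],[0, T₁]]. Then T₀ is of class C_{0·} (‖T₀^n x‖ → 0 for all x ∈ H₀) and T₁ is of class C_{1·} (‖T₁^n x‖ ↛ 0 for every nonzero x ∈ H₀^⊥). -/

import Mathlib

open ContinuousLinearMap Filter Topology

private lemma key_lemma {H : Type*} [NormedAddCommGroup H] [InnerProductSpace ℂ H]
    (T : H →L[ℂ] H) (C : ℝ) (hC : ∀ n : ℕ, ‖T ^ n‖ ≤ C) (x : H)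
    (h : ∀ ε > (0:ℝ), ∃ (N : ℕ) (m z : H), (T ^ N) x = m + z ∧
      Tendsto (fun n : ℕ => ‖(T ^ n) m‖) atTop (𝓝 0) ∧ ‖z‖ < ε) :
    Tendsto (fun n : ℕ => ‖(T ^ n) x‖) atTop (𝓝 0) := by
  have hC0 : (0:ℝ) ≤ C := le_trans (norm_nonneg _) (hC 0)
  rw [Metric.tendsto_atTop]
  intro ε hε
  have hε' : (0:ℝ) < ε / (2 * (C + 1)) := by positivity
  obtain ⟨N, m, z, hdec, hm, hz⟩ := h _ hε'
  rw [Metric.tendsto_atTop] at hm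
  obtain ⟨K, hK⟩ := hm (ε / 2) (by positivity)
  refine ⟨N + K, fun n hn => ?_⟩
  have hsplit : (T ^ n) x = (T ^ (n - N)) ((T ^ N) x) := by
    rw [← ContinuousLinearMap.comp_apply, ← mul_def, ← pow_add,
      Nat.sub_add_cancel (le_trans (Nat.le_add_right N K) hn)]
  have h1 : ‖(T ^ (n - N)) m‖ < ε / 2 := by
    have := hK (n - N) (by omega)
    rwa [Real.dist_eq, sub_zero, abs_of_nonneg (norm_nonneg _)] at this
  have h2 : ‖(T ^ (n - N)) z‖ ≤ C * (ε / (2 * (C + 1))) := by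
    calc ‖(T ^ (n - N)) z‖ ≤ ‖T ^ (n - N)‖ * ‖z‖ := le_opNorm _ _
    _ ≤ C * (ε / (2 * (C + 1))) := by
        apply mul_le_mul (hC _) (le_of_lt hz) (norm_nonneg _) hC0
  have h3 : C * (ε / (2 * (C + 1))) < ε / 2 := by
    rw [show C * (ε / (2 * (C + 1))) = C * ε / (2 * (C + 1)) by ring,
      div_lt_div_iff₀ (by linarith) (by norm_num)]
    nlinarith
  rw [Real.dist_eq, sub_zero, abs_of_nonneg (norm_nonneg _), hsplit, hdec, map_add]
  calc ‖(T ^ (n - N)) m + (T ^ (n - N)) z‖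
      ≤ ‖(T ^ (n - N)) m‖ + ‖(T ^ (n - N)) z‖ := norm_add_le _ _
    _ < ε / 2 + ε / 2 := by linarith
    _ = ε := by ring

/-- Kérchy's lemma: write a power bounded `T` in block-triangular form with respect to
`H = H₀ ⊕ H₀ᗮ`, where `H₀` (here `M`) is the stable subspace and `P` is the orthogonal
projection onto `H₀ᗮ`.  Then the diagonal entry `T₀ = T|H₀` is of class `C₀·`
(`‖T₀ⁿ x‖ → 0` for all `x ∈ H₀`) and `T₁ = P T|H₀ᗮ` is of class `C₁·`
(`‖T₁ⁿ y‖ ↛ 0` for every nonzero `y ∈ H₀ᗮ`). -/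
theorem stmt12 {H : Type*} [NormedAddCommGroup H] [InnerProductSpace ℂ H] [CompleteSpace H]
    (T : H →L[ℂ] H) (hT : ∃ C : ℝ, ∀ n : ℕ, ‖T ^ n‖ ≤ C)
    (M : Submodule ℂ H)
    (hM : (M : Set H) = {x : H | Tendsto (fun n : ℕ => ‖(T ^ n) x‖) atTop (𝓝 0)})
    (P : H →L[ℂ] H) (hPsa : IsSelfAdjoint P)
    (hPrange : ∀ x : H, P x ∈ Mᗮ) (hPid : ∀ y ∈ Mᗮ, P y = y) :
    (∀ x ∈ M, T x ∈ M) ∧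
    (∀ x ∈ M, Tendsto (fun n : ℕ => ‖(T ^ n) x‖) atTop (𝓝 0)) ∧
    (∀ y ∈ Mᗮ, y ≠ 0 →
      ¬ Tendsto (fun n : ℕ => ‖((P ∘L T) ^ n) y‖) atTop (𝓝 0)) := by
  obtain ⟨C, hC⟩ := hT
  have hmem : ∀ x : H, x ∈ M ↔ Tendsto (fun n : ℕ => ‖(T ^ n) x‖) atTop (𝓝 0) := by
    intro x
    constructor
    · intro hx; have : x ∈ (M : Set H) := hx
      rwa [hM] at this
    · intro hx; have : x ∈ (M : Set H) := by rw [hM]; exact hx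
      exact this
  -- invariance
  have hInv : ∀ x ∈ M, T x ∈ M := by
    intro x hx
    rw [hmem] at hx ⊢
    have : (fun n : ℕ => ‖(T ^ n) (T x)‖) = fun n : ℕ => ‖(T ^ (n + 1)) x‖ := by
      funext n
      rw [pow_succ, ContinuousLinearMap.mul_apply]
    rw [this]
    exact hx.comp (tendsto_add_atTop_nat 1)
  -- M is closed
  have hClosed : IsClosed (M : Set H) := by
    rw [← isSeqClosed_iff_isClosed]
    intro u x hu hux
    rw [SetLike.mem_coe, hmem]
    apply key_lemma T C hC
    intro ε hε
    obtain ⟨k, hk⟩ := (Metric.tendsto_atTop.mp hux) ε hε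
    refine ⟨0, u k, x - u k, by simp, ?_, ?_⟩
    · exact (hmem _).mp (hu k)
    · have := hk k le_rfl
      rwa [dist_eq_norm, ← norm_sub_rev] at this
  -- x - P x ∈ M
  have hcompl : ∀ x : H, x - P x ∈ M := by
    intro x
    have h1 : x - P x ∈ Mᗮᗮ := by
      rw [Submodule.mem_orthogonal]
      intro u hu
      have h2 : inner ℂ u (P x) = (inner ℂ u x : ℂ) := by
        conv_lhs => rw [← hPsa.adjoint_eq]
        rw [ContinuousLinearMap.adjoint_inner_right, hPid u hu]
      rw [inner_sub_right, h2, sub_self]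
    rwa [Submodule.orthogonal_orthogonal_eq_closure,
      IsClosed.submodule_topologicalClosure_eq hClosed] at h1
  refine ⟨hInv, fun x hx => (hmem x).mp hx, ?_⟩
  intro y hy hy0 htend
  -- decomposition invariant
  have hdec : ∀ n : ℕ, (T ^ n) y - ((P ∘L T) ^ n) y ∈ M := by
    intro n
    induction n with
    | zero => simp
    | succ n ih =>
      have : (T ^ (n+1)) y - ((P ∘L T) ^ (n+1)) y =
          T ((T ^ n) y - ((P ∘L T) ^ n) y) +
          (T (((P ∘L T) ^ n) y) - P (T (((P ∘L T) ^ n) y))) := by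
        rw [pow_succ', pow_succ', ContinuousLinearMap.mul_apply, ContinuousLinearMap.mul_apply, comp_apply, map_sub]
        abel
      rw [this]
      exact M.add_mem (hInv _ ih) (hcompl _)
  have hyM : y ∈ M := by
    rw [hmem]
    apply key_lemma T C hC
    intro ε hε
    obtain ⟨N, hN⟩ := (Metric.tendsto_atTop.mp htend) ε hε
    refine ⟨N, (T ^ N) y - ((P ∘L T) ^ N) y, ((P ∘L T) ^ N) y, by abel, ?_, ?_⟩
    · rw [← hmem]; exact hdec N
    · have := hN N le_rfl
      rwa [Real.dist_eq, sub_zero, abs_of_nonneg (norm_nonneg _)] at this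
  have h0 : (inner ℂ y y : ℂ) = 0 := Submodule.inner_right_of_mem_orthogonal hyM hy
  exact hy0 (inner_self_eq_zero.mp h0)
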